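/- Let γ, σ > 0 and let (S, I, P) be a positive classical solution of the general parabolic Dirichlet problem (1.2) on Ω × (0, ∞). Then for all x ∈ Ω̄ and t ≥ 0, S(x,t) + I(x,t) ≤ max{ max_{Ω̄} (S₀ + I₀), (a−b)/c }. -/

import Mathlib

open Set Filter Topology

noncomputable def vlap {N : ℕ} (f : EuclideanSpace ℝ (Fin N) → ℝ)
    (x : EuclideanSpace ℝ (Fin N)) : ℝ :=
  ∑ i : Fin N, fderiv ℝ (fun y => fderiv ℝ f y (EuclideanSpace.single i 1)) x
    (EuclideanSpace.single i 1)

/-- `u` is a positive classical solution component of a parabolic Dirichlet problem on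
`Ω × (0, ∞)`: continuous on `closure Ω × [0, ∞)`, twice continuously differentiable in
space and once in time, strictly positive in `Ω × (0, ∞)`, vanishing on
`frontier Ω × (0, ∞)`, with positive initial data in `Ω`. -/
def ParaSol {N : ℕ} (Ω : Set (EuclideanSpace ℝ (Fin N)))
    (u : EuclideanSpace ℝ (Fin N) → ℝ → ℝ) : Prop :=
  ContinuousOn (fun p : EuclideanSpace ℝ (Fin N) × ℝ => u p.1 p.2) (closure Ω ×ˢ Ici 0) ∧
  (∀ t > (0 : ℝ), ContDiffOn ℝ 2 (fun y => u y t) Ω) ∧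
  (∀ x ∈ Ω, ContDiffOn ℝ 1 (fun s => u x s) (Ioi 0)) ∧
  (∀ x ∈ Ω, ∀ t > (0 : ℝ), 0 < u x t) ∧
  (∀ x ∈ frontier Ω, ∀ t > (0 : ℝ), u x t = 0) ∧
  (∀ x ∈ Ω, 0 < u x 0)

section Aux

/-- One-sided first-derivative test: at a maximum over `[0, t₀]` attained at the right
endpoint `t₀ > 0`, the derivative is nonnegative. -/
lemma deriv_nonneg_of_max_left {h : ℝ → ℝ} {t₀ L : ℝ}
    (hd : HasDerivAt h L t₀)
    (hmax : ∀ s ∈ Icc 0 t₀, h s ≤ h t₀) (ht₀ : 0 < t₀) : 0 ≤ L := by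
  have hslope : Tendsto (slope h t₀) (𝓝[<] t₀) (𝓝 L) :=
    (hasDerivAt_iff_tendsto_slope.1 hd).mono_left (nhdsWithin_mono _ (fun s hs => ne_of_lt hs))
  have hev : ∀ᶠ s in 𝓝[<] t₀, 0 ≤ slope h t₀ s := by
    filter_upwards [Ioo_mem_nhdsLT_of_mem (Set.mem_Ioc.2 ⟨ht₀, le_refl t₀⟩)] with s hs
    have h1 := hmax s ⟨le_of_lt hs.1, le_of_lt hs.2⟩
    rw [slope_def_field, div_nonneg_iff]
    right
    constructor <;> nlinarith [hs.2, h1]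
  exact ge_of_tendsto hslope hev

/-- Second-derivative test: at a local maximum, a second derivative is nonpositive. -/
lemma second_deriv_nonpos_of_localmax {g g' : ℝ → ℝ} {A : ℝ}
    (hg : ∀ᶠ s in 𝓝 (0:ℝ), HasDerivAt g (g' s) s)
    (hA : HasDerivAt g' A 0) (hmax : IsLocalMax g 0) : A ≤ 0 := by
  by_contra hAp
  push_neg at hAp
  have hg0 : HasDerivAt g (g' 0) 0 := hg.self_of_nhds
  have hg'0 : g' 0 = 0 := by
    have := hmax.deriv_eq_zero
    rwa [hg0.deriv] at this
  have hslope : Tendsto (slope g' 0) (𝓝[>] 0) (𝓝 A) :=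
    (hasDerivAt_iff_tendsto_slope.1 hA).mono_left (nhdsWithin_mono _ (fun s hs => ne_of_gt hs))
  have hpos : ∀ᶠ s in 𝓝[>] (0:ℝ), 0 < g' s := by
    filter_upwards [hslope.eventually (eventually_gt_nhds (half_lt_self hAp)),
      self_mem_nhdsWithin] with s hs hs0
    rw [slope_def_field, hg'0, sub_zero, sub_zero] at hs
    have hs' : (0:ℝ) < s := hs0
    rw [lt_div_iff₀ hs'] at hs
    nlinarith
  obtain ⟨u, hu, hIoo⟩ := mem_nhdsGT_iff_exists_Ioo_subset.1 hpos
  obtain ⟨ε₁, hε₁, hball₁⟩ := Metric.eventually_nhds_iff.1 hg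
  obtain ⟨ε₂, hε₂, hball₂⟩ := Metric.eventually_nhds_iff.1 hmax
  set η : ℝ := min (min (u/2) (ε₁/2)) (ε₂/2) with hη
  have hu' : (0:ℝ) < u := hu
  have hηpos : 0 < η := lt_min (lt_min (by linarith) (by linarith)) (by linarith)
  have hηu : η < u := lt_of_le_of_lt (le_trans (min_le_left _ _) (min_le_left _ _)) (by linarith)
  have hηε₁ : η < ε₁ := lt_of_le_of_lt (le_trans (min_le_left _ _) (min_le_right _ _)) (by linarith)
  have hηε₂ : η < ε₂ := lt_of_le_of_lt (min_le_right _ _) (by linarith)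
  have hderiv : ∀ s ∈ Icc (0:ℝ) η, HasDerivAt g (g' s) s := by
    intro s hs
    apply hball₁
    rw [Real.dist_eq, sub_zero, abs_of_nonneg hs.1]
    exact lt_of_le_of_lt hs.2 hηε₁
  have hmono : StrictMonoOn g (Icc (0:ℝ) η) := by
    apply strictMonoOn_of_deriv_pos (convex_Icc _ _)
    · intro s hs; exact (hderiv s hs).continuousAt.continuousWithinAt
    · intro s hs
      rw [interior_Icc] at hs
      rw [(hderiv s ⟨le_of_lt hs.1, le_of_lt hs.2⟩).deriv]
      exact hIoo ⟨hs.1, lt_trans hs.2 hηu⟩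
  have h1 : g 0 < g η := hmono ⟨le_refl _, le_of_lt hηpos⟩ ⟨le_of_lt hηpos, le_refl _⟩ hηpos
  have h2 : g η ≤ g 0 := hball₂ (by rw [Real.dist_eq, sub_zero, abs_of_pos hηpos]; exact hηε₂)
  linarith

variable {N : ℕ} {Ω : Set (EuclideanSpace ℝ (Fin N))}

lemma dirsec_nonpos (hΩ : IsOpen Ω) {f : EuclideanSpace ℝ (Fin N) → ℝ}
    (hf : ContDiffOn ℝ 2 f Ω) {x₀ : EuclideanSpace ℝ (Fin N)} (hx : x₀ ∈ Ω)
    (hmax : ∀ y ∈ Ω, f y ≤ f x₀) (e : EuclideanSpace ℝ (Fin N)) :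
    fderiv ℝ (fun y => fderiv ℝ f y e) x₀ e ≤ 0 := by
  set line : ℝ → EuclideanSpace ℝ (Fin N) := fun s => x₀ + s • e with hline
  have hline0 : line 0 = x₀ := by simp [hline]
  have hlineD : ∀ s : ℝ, HasDerivAt line e s := by
    intro s
    have := ((hasDerivAt_id s).smul_const e).const_add x₀
    rw [one_smul] at this
    exact this
  have hlineC : Continuous line := by continuity
  have hopen : IsOpen (line ⁻¹' Ω) := hΩ.preimage hlineC
  have h0mem : (0:ℝ) ∈ line ⁻¹' Ω := by simp [hline0, hx]
  have hnb : line ⁻¹' Ω ∈ 𝓝 (0:ℝ) := hopen.mem_nhds h0mem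
  set F : EuclideanSpace ℝ (Fin N) → ℝ := fun y => fderiv ℝ f y e with hF
  have hg : ∀ᶠ s in 𝓝 (0:ℝ), HasDerivAt (f ∘ line) (F (line s)) s := by
    filter_upwards [hnb] with s hs
    have hdf : DifferentiableAt ℝ f (line s) :=
      (hf.contDiffAt (hΩ.mem_nhds hs)).differentiableAt two_ne_zero
    exact hdf.hasFDerivAt.comp_hasDerivAt s (hlineD s)
  have hFd : DifferentiableAt ℝ F x₀ := by
    have h1 : ContDiffOn ℝ 1 (fderiv ℝ f) Ω := hf.fderiv_of_isOpen hΩ le_rfl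
    have h2 : DifferentiableAt ℝ (fderiv ℝ f) x₀ :=
      (h1.contDiffAt (hΩ.mem_nhds hx)).differentiableAt one_ne_zero
    exact (ContinuousLinearMap.apply ℝ ℝ e).differentiableAt.comp x₀ h2
  have hA : HasDerivAt (F ∘ line) (fderiv ℝ F x₀ e) 0 := by
    have hFd' : HasFDerivAt F (fderiv ℝ F x₀) (line 0) := hline0 ▸ hFd.hasFDerivAt
    exact hFd'.comp_hasDerivAt 0 (hlineD 0)
  have hlm : IsLocalMax (f ∘ line) 0 := by
    filter_upwards [hnb] with s hs
    simpa [hline0] using hmax (line s) hs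
  exact second_deriv_nonpos_of_localmax hg hA hlm

lemma vlap_nonpos (hΩ : IsOpen Ω) {f : EuclideanSpace ℝ (Fin N) → ℝ}
    (hf : ContDiffOn ℝ 2 f Ω) {x₀ : EuclideanSpace ℝ (Fin N)} (hx : x₀ ∈ Ω)
    (hmax : ∀ y ∈ Ω, f y ≤ f x₀) : vlap f x₀ ≤ 0 :=
  Finset.sum_nonpos fun _ _ => dirsec_nonpos hΩ hf hx hmax _

lemma vlap_add (hΩ : IsOpen Ω) {f g : EuclideanSpace ℝ (Fin N) → ℝ}
    (hf : ContDiffOn ℝ 2 f Ω) (hg : ContDiffOn ℝ 2 g Ω)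
    {x : EuclideanSpace ℝ (Fin N)} (hx : x ∈ Ω) :
    vlap (fun y => f y + g y) x = vlap f x + vlap g x := by
  have hdiff : ∀ {h : EuclideanSpace ℝ (Fin N) → ℝ}, ContDiffOn ℝ 2 h Ω →
      ∀ y ∈ Ω, DifferentiableAt ℝ h y := fun hh y hy =>
    (hh.contDiffAt (hΩ.mem_nhds hy)).differentiableAt two_ne_zero
  have hFd : ∀ {h : EuclideanSpace ℝ (Fin N) → ℝ}, ContDiffOn ℝ 2 h Ω →
      ∀ (e : EuclideanSpace ℝ (Fin N)), DifferentiableAt ℝ (fun y => fderiv ℝ h y e) x := by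
    intro h hh e
    have h1 : ContDiffOn ℝ 1 (fderiv ℝ h) Ω := hh.fderiv_of_isOpen hΩ le_rfl
    have h2 : DifferentiableAt ℝ (fderiv ℝ h) x :=
      (h1.contDiffAt (hΩ.mem_nhds hx)).differentiableAt one_ne_zero
    exact (ContinuousLinearMap.apply ℝ ℝ e).differentiableAt.comp x h2
  unfold vlap
  rw [← Finset.sum_add_distrib]
  apply Finset.sum_congr rfl
  intro i _
  set e := EuclideanSpace.single i (1:ℝ)
  have hEq : (fun y => fderiv ℝ (fun z => f z + g z) y e)
      =ᶠ[𝓝 x] (fun y => fderiv ℝ f y e + fderiv ℝ g y e) := by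
    filter_upwards [hΩ.mem_nhds hx] with y hy
    rw [fderiv_fun_add (hdiff hf y hy) (hdiff hg y hy)]
    rfl
  rw [hEq.fderiv_eq, fderiv_fun_add (hFd hf e) (hFd hg e)]
  rfl

end Aux

set_option maxHeartbeats 1000000
/-- A priori bound: for any positive classical solution of the general problem (1.2),
S + I ≤ max { max_Ω̄ (S₀ + I₀), (a-b)/c } on Ω̄ × [0, ∞). -/
theorem stmt15 {N : ℕ} (hN : 1 ≤ N) (Ω : Set (EuclideanSpace ℝ (Fin N)))
    (hΩopen : IsOpen Ω) (hΩconn : IsConnected Ω) (hΩbd : Bornology.IsBounded Ω)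
    (a b c k el gam th sig rh d D : ℝ) (ha : 0 < a) (hb : 0 < b) (hc : 0 < c)
    (hk : 0 < k) (hel : 0 < el) (hgam : 0 < gam) (hth : 0 < th) (hsig : 0 < sig)
    (hrh : 0 < rh) (hd : 0 < d) (hD : 0 < D) (hab : b < a)
    (S I P : EuclideanSpace ℝ (Fin N) → ℝ → ℝ)
    (hS : ParaSol Ω S) (hI : ParaSol Ω I) (hP : ParaSol Ω P)
    (heqS : ∀ x ∈ Ω, ∀ t > (0 : ℝ),
      deriv (fun s => S x s) t - d * vlap (fun y => S y t) x
        = a * (S x t + I x t) - b * S x t - c * (S x t + I x t) * S x t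
          - k * I x t * S x t - el * S x t * P x t)
    (heqI : ∀ x ∈ Ω, ∀ t > (0 : ℝ),
      deriv (fun s => I x s) t - d * vlap (fun y => I y t) x
        = k * I x t * S x t - b * I x t - c * (S x t + I x t) * I x t
          - gam * I x t * P x t)
    (heqP : ∀ x ∈ Ω, ∀ t > (0 : ℝ),
      deriv (fun s => P x s) t - D * vlap (fun y => P y t) x
        = th * S x t * P x t + sig * I x t * P x t - rh * P x t) :
    ∀ x ∈ closure Ω, ∀ t ≥ (0 : ℝ),
      S x t + I x t
        ≤ max (sSup ((fun y => S y 0 + I y 0) '' closure Ω)) ((a - b) / c) := by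
  set M : ℝ := max (sSup ((fun y => S y 0 + I y 0) '' closure Ω)) ((a - b) / c) with hM
  have hcomp : IsCompact (closure Ω) := hΩbd.isCompact_closure
  have hcont0 : ContinuousOn (fun x => S x 0 + I x 0) (closure Ω) := by
    have hmap : ∀ x ∈ closure Ω,
        ((x, (0:ℝ)) : EuclideanSpace ℝ (Fin N) × ℝ) ∈ closure Ω ×ˢ Ici (0:ℝ) :=
      fun x hx => ⟨hx, mem_Ici.mpr le_rfl⟩
    have hcS : ContinuousOn (fun x => S x 0) (closure Ω) :=
      hS.1.comp ((continuous_id.prodMk continuous_const).continuousOn) hmap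
    have hcI : ContinuousOn (fun x => I x 0) (closure Ω) :=
      hI.1.comp ((continuous_id.prodMk continuous_const).continuousOn) hmap
    exact hcS.add hcI
  have hbdd : BddAbove ((fun y => S y 0 + I y 0) '' closure Ω) :=
    (hcomp.image_of_continuousOn hcont0).bddAbove
  have hinit : ∀ x ∈ closure Ω, S x 0 + I x 0 ≤ M := fun x hx =>
    le_trans (le_csSup hbdd (mem_image_of_mem _ hx)) (le_max_left _ _)
  have habc : (0:ℝ) < (a - b) / c := div_pos (by linarith) hc
  have hMpos : 0 < M := lt_of_lt_of_le habc (le_max_right _ _)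
  by_contra hcon
  push_neg at hcon
  obtain ⟨xs, hxs, ts, hts, hgt⟩ := hcon
  have hT : 0 < ts := by
    rcases lt_or_eq_of_le hts with h | h
    · exact h
    · exact absurd hgt (not_lt.2 (h ▸ hinit xs hxs))
  set T := ts
  set δ : ℝ := S xs T + I xs T - M with hδ
  have hδpos : 0 < δ := by simp only [hδ]; linarith
  set ε : ℝ := δ / (2 * (T + 1)) with hε
  have hεpos : 0 < ε := div_pos hδpos (by linarith)
  have hεT : ε * T ≤ δ / 2 := by
    rw [hε, div_mul_eq_mul_div, div_le_div_iff₀ (by linarith) (by norm_num)]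
    nlinarith
  set v : EuclideanSpace ℝ (Fin N) × ℝ → ℝ :=
    fun p => S p.1 p.2 + I p.1 p.2 - ε * p.2 with hv
  set K : Set (EuclideanSpace ℝ (Fin N) × ℝ) := closure Ω ×ˢ Icc 0 T with hK
  have hKsub : K ⊆ closure Ω ×ˢ Ici 0 := prod_mono subset_rfl Icc_subset_Ici_self
  have hKcomp : IsCompact K := hcomp.prod isCompact_Icc
  have hKne : K.Nonempty := ⟨(xs, T), hxs, le_of_lt hT, le_refl T⟩
  have hvcont : ContinuousOn v K :=
    ((hS.1.mono hKsub).add (hI.1.mono hKsub)).sub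
      (continuous_const.mul continuous_snd).continuousOn
  obtain ⟨p₀, hp₀K, hp₀max⟩ := hKcomp.exists_isMaxOn hKne hvcont
  obtain ⟨x₀, t₀⟩ := p₀
  obtain ⟨hx₀cl, ht₀0, ht₀T⟩ : x₀ ∈ closure Ω ∧ 0 ≤ t₀ ∧ t₀ ≤ T := by
    obtain ⟨h1, h2⟩ := hp₀K
    exact ⟨h1, h2.1, h2.2⟩
  have hvs : M < v (xs, T) := by
    simp only [hv]
    linarith
  have hvp₀ : M < v (x₀, t₀) := lt_of_lt_of_le hvs (hp₀max ⟨hxs, le_of_lt hT, le_refl T⟩)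
  have hveq : v (x₀, t₀) = S x₀ t₀ + I x₀ t₀ - ε * t₀ := rfl
  have hvle : v (x₀, t₀) ≤ S x₀ t₀ + I x₀ t₀ := by
    rw [hveq]
    nlinarith [mul_nonneg (le_of_lt hεpos) ht₀0]
  have hu₀ : M < S x₀ t₀ + I x₀ t₀ := lt_of_lt_of_le hvp₀ hvle
  have ht₀pos : 0 < t₀ := by
    rcases lt_or_eq_of_le ht₀0 with h | h
    · exact h
    · exfalso
      have h1 := hinit x₀ hx₀cl
      rw [hveq, ← h] at hvp₀
      simp at hvp₀
      linarith
  have hx₀Ω : x₀ ∈ Ω := by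
    by_contra hxo
    have hfr : x₀ ∈ frontier Ω := by
      rw [frontier, hΩopen.interior_eq]
      exact ⟨hx₀cl, hxo⟩
    have h1 := hS.2.2.2.2.1 x₀ hfr t₀ ht₀pos
    have h2 := hI.2.2.2.2.1 x₀ hfr t₀ ht₀pos
    rw [h1, h2] at hu₀
    linarith
  -- positivity at the max point
  have hSpos : 0 < S x₀ t₀ := hS.2.2.2.1 x₀ hx₀Ω t₀ ht₀pos
  have hIpos : 0 < I x₀ t₀ := hI.2.2.2.1 x₀ hx₀Ω t₀ ht₀pos
  have hPpos : 0 < P x₀ t₀ := hP.2.2.2.1 x₀ hx₀Ω t₀ ht₀pos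
  -- time derivative bound
  have hdS : DifferentiableAt ℝ (fun s => S x₀ s) t₀ :=
    (((hS.2.2.1 x₀ hx₀Ω).contDiffAt (isOpen_Ioi.mem_nhds ht₀pos)).differentiableAt one_ne_zero)
  have hdI : DifferentiableAt ℝ (fun s => I x₀ s) t₀ :=
    (((hI.2.2.1 x₀ hx₀Ω).contDiffAt (isOpen_Ioi.mem_nhds ht₀pos)).differentiableAt one_ne_zero)
  set LS := deriv (fun s => S x₀ s) t₀
  set LI := deriv (fun s => I x₀ s) t₀
  have hder : HasDerivAt (fun s => S x₀ s + I x₀ s - ε * s) (LS + LI - ε) t₀ := by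
    have h1 : HasDerivAt (fun s : ℝ => ε * s) ε t₀ := by
      simpa using (hasDerivAt_id t₀).const_mul ε
    exact (hdS.hasDerivAt.add hdI.hasDerivAt).sub h1
  have htime : 0 ≤ LS + LI - ε := by
    apply deriv_nonneg_of_max_left hder _ ht₀pos
    intro s hs
    have hmem : ((x₀, s) : EuclideanSpace ℝ (Fin N) × ℝ) ∈ K :=
      ⟨hx₀cl, hs.1, le_trans hs.2 ht₀T⟩
    have h1 : v (x₀, s) ≤ v (x₀, t₀) := hp₀max hmem
    exact h1
  -- space: laplacian bound
  have hC2S : ContDiffOn ℝ 2 (fun y => S y t₀) Ω := hS.2.1 t₀ ht₀pos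
  have hC2I : ContDiffOn ℝ 2 (fun y => I y t₀) Ω := hI.2.1 t₀ ht₀pos
  have hspmax : ∀ y ∈ Ω, S y t₀ + I y t₀ ≤ S x₀ t₀ + I x₀ t₀ := by
    intro y hy
    have hmem : ((y, t₀) : EuclideanSpace ℝ (Fin N) × ℝ) ∈ K :=
      ⟨subset_closure hy, ht₀0, ht₀T⟩
    have h1 : v (y, t₀) ≤ v (x₀, t₀) := hp₀max hmem
    have h2 : v (y, t₀) = S y t₀ + I y t₀ - ε * t₀ := rfl
    rw [hveq, h2] at h1
    linarith
  have hlap : vlap (fun y => S y t₀) x₀ + vlap (fun y => I y t₀) x₀ ≤ 0 := by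
    have := vlap_nonpos hΩopen (hC2S.add hC2I) hx₀Ω hspmax
    rwa [vlap_add hΩopen hC2S hC2I hx₀Ω] at this
  -- PDE at the max point
  have eS := heqS x₀ hx₀Ω t₀ ht₀pos
  have eI := heqI x₀ hx₀Ω t₀ ht₀pos
  have hcu : a - b < c * (S x₀ t₀ + I x₀ t₀) := by
    have h1 : (a - b) / c < S x₀ t₀ + I x₀ t₀ :=
      lt_of_le_of_lt (le_max_right _ _) hu₀
    rwa [div_lt_iff₀ hc, mul_comm] at h1
  have hcomb : LS + LI
      - d * (vlap (fun y => S y t₀) x₀ + vlap (fun y => I y t₀) x₀)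
      = (a - b) * (S x₀ t₀ + I x₀ t₀)
        - c * (S x₀ t₀ + I x₀ t₀) * (S x₀ t₀ + I x₀ t₀)
        - el * (S x₀ t₀ * P x₀ t₀) - gam * (I x₀ t₀ * P x₀ t₀) := by
    linear_combination eS + eI
  have hdlap : 0 ≤ -(d * (vlap (fun y => S y t₀) x₀ + vlap (fun y => I y t₀) x₀)) := by
    have := mul_nonpos_of_nonneg_of_nonpos (le_of_lt hd) hlap
    linarith
  nlinarith [mul_pos hel (mul_pos hSpos hPpos), mul_pos hgam (mul_pos hIpos hPpos),
    mul_pos (add_pos hSpos hIpos) (sub_pos.2 hcu)]
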